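/- For λ = (1,...,1) and any s ∈ (0,n), the intersection of the equilibrium set {e ∈ [0,1]^n : e_n(1-e_1) = e_1(1-e_2) = ... = e_{n-1}(1-e_n)} with the hyperplane {e : Σ_i e_i = s} is exactly the singleton {(s/n, ..., s/n)}. -/

import Mathlib

open Finset Set

def IsEquilibrium (n : ℕ) [NeZero n] (lam e : Fin n → ℝ) : Prop :=
  ∀ i j : Fin n, lam i * e i * (1 - e (i + 1)) = lam j * e j * (1 - e (j + 1))

theorem stmt15 (n : ℕ) [NeZero n] (hn : 2 ≤ n) (s : ℝ) (hs : s ∈ Set.Ioo (0:ℝ) (n:ℝ))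
    (e : Fin n → ℝ) :
    ((∀ i, e i ∈ Set.Icc (0:ℝ) 1) ∧ IsEquilibrium n (fun _ => 1) e ∧ ∑ i, e i = s)
      ↔ e = fun _ => s / n := by
  open Fin.NatCast in
  have hn0 : (0:ℝ) < (n:ℝ) := by exact_mod_cast (by omega : 0 < n)
  obtain ⟨hs0, hsn⟩ := hs
  constructor
  · rintro ⟨hbox, heq, hsum⟩
    simp only [IsEquilibrium, one_mul] at heq
    set c := e 0 * (1 - e (0 + 1)) with hcdef
    have hc : ∀ i, e i * (1 - e (i + 1)) = c := fun i => heq i 0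
    have hc0 : 0 ≤ c := by
      rw [← hc 0]
      have h1 := hbox 0
      have h2 := hbox (0 + 1)
      nlinarith [h1.1, h1.2, h2.1, h2.2]
    -- goal: e constant s/n
    have key : ∀ j, e j = s / n := by
      rcases eq_or_lt_of_le hc0 with hceq | hcpos
      · -- c = 0 case: contradiction with s < n
        exfalso
        -- some e i > 0
        obtain ⟨i, hi⟩ : ∃ i, 0 < e i := by
          by_contra h
          push_neg at h
          have : ∑ j, e j ≤ 0 := Finset.sum_nonpos (fun j _ => h j)
          linarith [hsum ▸ this]
        have hone : ∀ m : ℕ, e (i + ((m + 1 : ℕ) : Fin n)) = 1 := by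
          intro m
          induction m with
          | zero =>
            have h := hc i
            rw [← hceq] at h
            have : 1 - e (i + 1) = 0 := by
              rcases mul_eq_zero.mp h.symm.symm with h1 | h2
              · exact absurd h1 (ne_of_gt hi)
              · exact h2
            have : e (i + 1) = 1 := by linarith
            simpa [Nat.cast_one] using this
          | succ m ih =>
            have h := hc (i + ((m + 1 : ℕ) : Fin n))
            rw [← hceq, ih] at h
            have : e (i + ((m + 1 : ℕ) : Fin n) + 1) = 1 := by linarith
            have hcast : (((m + 1 : ℕ) : Fin n) + 1) = ((m + 2 : ℕ) : Fin n) := by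
              exact (Nat.cast_succ (m + 1)).symm
            rw [add_assoc, hcast] at this
            exact this
        have hall : ∀ j, e j = 1 := by
          intro j
          set t : Fin n := j - i with ht
          have hj : j = i + t := by simp [ht]
          rcases Nat.eq_zero_or_pos t.val with h0 | hpos2
          · have : t = 0 := Fin.ext h0
            have hnn : ((n - 1 + 1 : ℕ) : Fin n) = 0 := by
              rw [Nat.sub_add_cancel (by omega : 1 ≤ n)]
              exact Fin.natCast_self n
            have := hone (n - 1)
            rw [hnn, add_zero] at this
            rw [hj, ‹t = 0›, add_zero]
            exact this
          · have : ((t.val - 1 + 1 : ℕ) : Fin n) = t := by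
              rw [Nat.sub_add_cancel hpos2, Fin.cast_val_eq_self]
            have h2 := hone (t.val - 1)
            rw [this] at h2
            rw [hj]; exact h2
        have : ∑ j, e j = (n : ℝ) := by
          rw [Finset.sum_congr rfl (fun j _ => hall j)]
          simp
        rw [hsum] at this
        linarith
      · -- c > 0 case
        have hpos : ∀ i, 0 < e i := by
          intro i
          have h := hc i
          have hb := (hbox i).1
          rcases eq_or_lt_of_le hb with h0 | h1
          · rw [← h0] at h; simp at h; linarith
          · exact h1
        have hlt1 : ∀ i, e (i + 1) < 1 := by
          intro i
          have h := hc i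
          have := hpos i
          nlinarith
        have hstep : ∀ i : Fin n, e i < e (i + 1) → e (i + 1) < e (i + 1 + 1) := by
          intro i h
          have h1 := hc i
          have h2 := hc (i + 1)
          have := hpos i
          have := hpos (i + 1)
          have := hlt1 i
          nlinarith
        have hstep' : ∀ i : Fin n, e (i + 1) < e i → e (i + 1 + 1) < e (i + 1) := by
          intro i h
          have h1 := hc i
          have h2 := hc (i + 1)
          have := hpos i
          have := hpos (i + 1)
          have := hlt1 i
          nlinarith
        -- compare e 0 and e (0+1)
        rcases lt_trichotomy (e 0) (e (0 + 1)) with hlt | heq0 | hgt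
        · exfalso
          have hmono : ∀ k : ℕ, e ((k : ℕ) : Fin n) < e (((k + 1 : ℕ)) : Fin n) := by
            intro k
            induction k with
            | zero => simpa using hlt
            | succ k ih =>
              have := hstep ((k : ℕ) : Fin n) (by
                have hcast : (((k : ℕ) : Fin n) + 1) = ((k + 1 : ℕ) : Fin n) := by push_cast; ring
                rw [hcast]; exact ih)
              have hcast : (((k : ℕ) : Fin n) + 1) = ((k + 1 : ℕ) : Fin n) := by push_cast; ring
              rw [hcast] at this
              have hcast2 : (((k + 1 : ℕ) : Fin n) + 1) = ((k + 1 + 1 : ℕ) : Fin n) := by push_cast; ring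
              rw [hcast2] at this
              exact this
          have hsm : StrictMono (fun k : ℕ => e ((k : ℕ) : Fin n)) :=
            strictMono_nat_of_lt_succ hmono
          have := hsm (show 0 < n by omega)
          simp [Fin.natCast_self] at this
        · -- equal case: all equal
          have hconst : ∀ k : ℕ, e ((k : ℕ) : Fin n) = e 0 := by
            intro k
            induction k with
            | zero => simp
            | succ k ih =>
              have h1 := hc ((k : ℕ) : Fin n)
              have h2 := hc 0
              rw [ih] at h1
              have he0 := hpos 0
              have : e (((k : ℕ) : Fin n) + 1) = e (0 + 1) := by
                have h4 := h1.trans h2.symm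
                have h3 := mul_left_cancel₀ (ne_of_gt he0) h4
                linarith
              have hcast : (((k : ℕ) : Fin n) + 1) = ((k + 1 : ℕ) : Fin n) := by push_cast; ring
              rw [hcast] at this
              rw [this]
              exact heq0.symm
          intro j
          have hj' : ∀ i : Fin n, e i = e 0 := fun i => by
            have := hconst i.val
            rwa [Fin.cast_val_eq_self] at this
          have hns : (n : ℝ) * e 0 = s := by
            calc (n : ℝ) * e 0 = ∑ _i : Fin n, e 0 := by simp [mul_comm]
              _ = ∑ i, e i := Finset.sum_congr rfl (fun i _ => (hj' i).symm)
              _ = s := hsum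
          rw [hj' j]
          field_simp
          linarith
        · exfalso
          have hmono : ∀ k : ℕ, e (((k + 1 : ℕ)) : Fin n) < e ((k : ℕ) : Fin n) := by
            intro k
            induction k with
            | zero => simpa using hgt
            | succ k ih =>
              have := hstep' ((k : ℕ) : Fin n) (by
                have hcast : (((k : ℕ) : Fin n) + 1) = ((k + 1 : ℕ) : Fin n) := by push_cast; ring
                rw [hcast]; exact ih)
              have hcast : (((k : ℕ) : Fin n) + 1) = ((k + 1 : ℕ) : Fin n) := by push_cast; ring
              rw [hcast] at this
              have hcast2 : (((k + 1 : ℕ) : Fin n) + 1) = ((k + 1 + 1 : ℕ) : Fin n) := by push_cast; ring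
              rw [hcast2] at this
              exact this
          have hsm : StrictAnti (fun k : ℕ => e ((k : ℕ) : Fin n)) :=
            strictAnti_nat_of_succ_lt hmono
          have := hsm (show 0 < n by omega)
          simp [Fin.natCast_self] at this
    exact funext key
  · rintro rfl
    refine ⟨fun i => ⟨by positivity, by rw [div_le_one hn0]; linarith⟩, fun i j => rfl, ?_⟩
    rw [Finset.sum_const, Finset.card_univ, Fintype.card_fin, nsmul_eq_mul]
    field_simp
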